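/- Let n ≥ 1, 1 ≤ p < ∞, let g : S^n → ℝ be continuous and let 0 < δ < π. Then lim_{t → ∞} t^n ∫_{S^n} ∫_{S^n \ C(−x,δ)} |g(x)−g(−x)|^p / d̃(x,y)^{n−tp} dH^n(y) dH^n(x) = 0 and lim_{t → ∞} t^n ∫_{S^n} ∫_{S^n \ C(−x,δ)} |g(x)−g(y)|^p / d̃(x,y)^{n−tp} dH^n(y) dH^n(x) = 0; i.e. in the limit the inner integrals concentrate at the antipode −x. -/

import Mathlib

open MeasureTheory Metric Filter
open scoped ENNReal NNReal Topology RealInnerProductSpace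

noncomputable section

/-- The unit sphere `S^n ⊆ ℝ^(n+1)`. -/
def Sph (n : ℕ) : Set (EuclideanSpace ℝ (Fin (n+1))) := Metric.sphere 0 1

/-- The geodesic distance `d(x,y) = arccos (x ⬝ y)` on the sphere. -/
def geoDist {n : ℕ} (x y : EuclideanSpace ℝ (Fin (n+1))) : ℝ := Real.arccos ⟪x, y⟫

/-- The normalized geodesic distance `d̃(x,y) = d(x,y)/π ∈ [0,1]`. -/
def nGeoDist {n : ℕ} (x y : EuclideanSpace ℝ (Fin (n+1))) : ℝ := geoDist x y / Real.pi

/-- The open spherical cap `C(v,r) = {w ∈ S^n : d(v,w) < r}`. -/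
def sphCap {n : ℕ} (v : EuclideanSpace ℝ (Fin (n+1))) (r : ℝ) :
    Set (EuclideanSpace ℝ (Fin (n+1))) := {w ∈ Sph n | geoDist v w < r}

/-- `n`-dimensional Hausdorff measure restricted to the sphere `S^n`. -/
def sphMeasure (n : ℕ) : Measure (EuclideanSpace ℝ (Fin (n+1))) :=
  (μH[n]).restrict (Sph n)

/-- The constant `c_{n,p} = H^{n-1}(S^{n-1}) · π^n · (n-1)! / p^n`. -/
def cnp (n : ℕ) (p : ℝ) : ℝ :=
  (μH[n-1] (Metric.sphere (0 : EuclideanSpace ℝ (Fin n)) 1)).toReal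
    * Real.pi ^ n * (Nat.factorial (n-1)) / p ^ n

lemma lipschitz_insertNth (n : ℕ) (i : Fin (n+1)) (s : ℝ) :
    LipschitzWith (n+1 : ℝ≥0) (fun v : Fin n → ℝ =>
      ((WithLp.equiv 2 (Fin (n+1) → ℝ)).symm (i.insertNth s v))) := by
  apply LipschitzWith.of_dist_le_mul
  intro v w
  have hd : (0:ℝ) ≤ dist v w := dist_nonneg
  rw [EuclideanSpace.dist_eq ((WithLp.equiv 2 (Fin (n+1) → ℝ)).symm (i.insertNth s v)) ((WithLp.equiv 2 (Fin (n+1) → ℝ)).symm (i.insertNth s w))]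
  have key : ∑ j, dist (((WithLp.equiv 2 (Fin (n+1) → ℝ)).symm (i.insertNth s v)) j)
      (((WithLp.equiv 2 (Fin (n+1) → ℝ)).symm (i.insertNth s w)) j) ^ 2
      ≤ (((n:ℝ)+1) * dist v w) ^ 2 := by
    rw [Fin.sum_univ_succAbove _ i]
    simp only [WithLp.equiv_symm_apply, PiLp.toLp_apply, Fin.insertNth_apply_same,
      Fin.insertNth_apply_succAbove, dist_self]
    have h1 : ∑ k : Fin n, dist (v k) (w k) ^ 2 ≤ (n:ℝ) * dist v w ^ 2 := by
      calc ∑ k : Fin n, dist (v k) (w k) ^ 2 ≤ ∑ _k : Fin n, dist v w ^ 2 :=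
            Finset.sum_le_sum fun k _ =>
              pow_le_pow_left₀ dist_nonneg (dist_le_pi_dist v w k) 2
        _ = (n:ℝ) * dist v w ^ 2 := by
            simp [Finset.sum_const, Finset.card_univ, nsmul_eq_mul]
    nlinarith [h1, sq_nonneg (dist v w), Nat.cast_nonneg (α := ℝ) n]
  calc Real.sqrt (∑ j, dist (((WithLp.equiv 2 (Fin (n+1) → ℝ)).symm (i.insertNth s v)) j)
          (((WithLp.equiv 2 (Fin (n+1) → ℝ)).symm (i.insertNth s w)) j) ^ 2)
      ≤ Real.sqrt ((((n:ℝ)+1) * dist v w) ^ 2) := Real.sqrt_le_sqrt key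
    _ = ((n:ℝ)+1) * dist v w := Real.sqrt_sq (by positivity)
    _ = ((n+1 : ℝ≥0) : ℝ) * dist v w := by push_cast; ring

lemma lipschitzOnWith_normalize (E : Type*) [NormedAddCommGroup E] [NormedSpace ℝ E] :
    LipschitzOnWith 2 (fun x : E => ‖x‖⁻¹ • x) {x : E | 1 ≤ ‖x‖} := by
  rw [lipschitzOnWith_iff_dist_le_mul]
  intro x hx y hy
  simp only [Set.mem_setOf_eq] at hx hy
  have hx0 : (0:ℝ) < ‖x‖ := lt_of_lt_of_le one_pos hx
  have hy0 : (0:ℝ) < ‖y‖ := lt_of_lt_of_le one_pos hy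
  have key : ‖x‖⁻¹ • x - ‖y‖⁻¹ • y = ‖x‖⁻¹ • (x - y) + (‖x‖⁻¹ - ‖y‖⁻¹) • y := by
    rw [smul_sub, sub_smul]; abel
  rw [dist_eq_norm, dist_eq_norm, key]
  have h2 : |‖x‖⁻¹ - ‖y‖⁻¹| * ‖y‖ ≤ ‖x - y‖ := by
    have hle : |‖y‖ - ‖x‖| ≤ ‖x - y‖ := by
      rw [norm_sub_rev]; exact abs_norm_sub_norm_le y x
    rw [inv_sub_inv hx0.ne' hy0.ne', abs_div, abs_mul, abs_of_pos hx0, abs_of_pos hy0]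
    rw [div_mul_eq_mul_div, div_le_iff₀ (by positivity)]
    nlinarith [mul_le_mul_of_nonneg_right hle hy0.le,
      mul_nonneg (sub_nonneg.2 hx) (mul_nonneg (norm_nonneg (x - y)) hy0.le)]
  calc ‖‖x‖⁻¹ • (x - y) + (‖x‖⁻¹ - ‖y‖⁻¹) • y‖
      ≤ ‖‖x‖⁻¹ • (x - y)‖ + ‖(‖x‖⁻¹ - ‖y‖⁻¹) • y‖ := norm_add_le _ _
    _ = ‖x‖⁻¹ * ‖x - y‖ + |‖x‖⁻¹ - ‖y‖⁻¹| * ‖y‖ := by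
        rw [norm_smul, norm_smul, Real.norm_eq_abs, Real.norm_eq_abs, abs_of_pos (by positivity)]
    _ ≤ 1 * ‖x - y‖ + ‖x - y‖ := by
        refine add_le_add (mul_le_mul_of_nonneg_right ?_ (norm_nonneg _)) h2
        exact inv_le_one_of_one_le₀ hx
    _ = (2:ℝ≥0) * ‖x - y‖ := by push_cast; ring

/-- The auxiliary pieces covering the sphere. -/
def sphPiece (n : ℕ) (i : Fin (n+1)) (s : ℝ) : Set (EuclideanSpace ℝ (Fin (n+1))) :=
  (fun x : EuclideanSpace ℝ (Fin (n+1)) => ‖x‖⁻¹ • x) ''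
    (((fun v : Fin n → ℝ => ((WithLp.equiv 2 (Fin (n+1) → ℝ)).symm (i.insertNth s v))) ''
        Metric.closedBall 0 (n+1)) ∩ {x | 1 ≤ ‖x‖})

lemma hausdorff_pi_ball_lt_top (n : ℕ) :
    μH[(n:ℝ)] (Metric.closedBall (0 : Fin n → ℝ) (n+1)) < ⊤ := by
  have h : (μH[(n:ℝ)] : Measure (Fin n → ℝ)) = volume := by
    simpa [Fintype.card_fin] using hausdorffMeasure_pi_real (ι := Fin n)
  rw [h]
  exact (isCompact_closedBall _ _).measure_lt_top

lemma sphPiece_lt_top (n : ℕ) (i : Fin (n+1)) (s : ℝ) :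
    μH[(n:ℝ)] (sphPiece n i s) < ⊤ := by
  have hd : (0:ℝ) ≤ (n:ℝ) := by positivity
  set A : Set (EuclideanSpace ℝ (Fin (n+1))) :=
    (fun v : Fin n → ℝ => ((WithLp.equiv 2 (Fin (n+1) → ℝ)).symm (i.insertNth s v))) ''
      Metric.closedBall 0 (n+1) with hA
  have h1 := (((lipschitzOnWith_normalize
      (EuclideanSpace ℝ (Fin (n+1)))).mono
        (Set.inter_subset_right (s := A)))).hausdorffMeasure_image_le hd
  have h3 := (lipschitz_insertNth n i s).hausdorffMeasure_image_le hd
    (Metric.closedBall 0 (n+1))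
  have h4 := hausdorff_pi_ball_lt_top n
  calc μH[(n:ℝ)] (sphPiece n i s) ≤ ((2:ℝ≥0) : ℝ≥0∞) ^ (n:ℝ) * μH[(n:ℝ)]
        ((((fun v : Fin n → ℝ => ((WithLp.equiv 2 (Fin (n+1) → ℝ)).symm (i.insertNth s v))) ''
          Metric.closedBall 0 (n+1)) ∩ {x | 1 ≤ ‖x‖})) := h1
    _ ≤ ((2:ℝ≥0) : ℝ≥0∞) ^ (n:ℝ) * (((n+1 : ℝ≥0) : ℝ≥0∞) ^ (n:ℝ) *
          μH[(n:ℝ)] (Metric.closedBall (0 : Fin n → ℝ) (n+1))) := by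
        refine mul_le_mul_right (le_trans (measure_mono Set.inter_subset_left) h3) _
    _ < ⊤ := by
        apply ENNReal.mul_lt_top
        · exact ENNReal.rpow_lt_top_of_nonneg hd ENNReal.coe_ne_top
        · exact ENNReal.mul_lt_top (ENNReal.rpow_lt_top_of_nonneg hd ENNReal.coe_ne_top) h4

lemma sph_subset_pieces (n : ℕ) :
    Sph n ⊆ ⋃ i : Fin (n+1), (sphPiece n i 1 ∪ sphPiece n i (-1)) := by
  intro x hx
  have hx1 : ‖x‖ = 1 := by simpa [Sph] using hx
  -- find a big coordinate
  have hsum : ∑ j, x j ^ 2 = 1 := by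
    have := EuclideanSpace.norm_eq x
    rw [hx1] at this
    have h2 : Real.sqrt (∑ j, ‖x j‖ ^ 2) = 1 := this.symm
    rw [Real.sqrt_eq_one] at h2
    simpa [Real.norm_eq_abs, sq_abs] using h2
  have hexists : ∃ i, 1/(n+1) ≤ x i ^ 2 := by
    by_contra hc
    push_neg at hc
    have : ∑ j, x j ^ 2 < ∑ _j : Fin (n+1), (1:ℝ)/(n+1) :=
      Finset.sum_lt_sum_of_nonempty Finset.univ_nonempty fun j _ => hc j
    rw [hsum, Finset.sum_const, Finset.card_univ, Fintype.card_fin, nsmul_eq_mul] at this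
    have hpos : (0:ℝ) < (n:ℝ)+1 := by positivity
    rw [show ((n+1 : ℕ):ℝ) = (n:ℝ)+1 by push_cast; ring, mul_one_div,
      div_self hpos.ne'] at this
    exact lt_irrefl _ this
  obtain ⟨i, hi⟩ := hexists
  have hxi : x i ≠ 0 := by
    intro h
    rw [h] at hi
    simp at hi
    nlinarith [hi]
  -- coordinates are at most 1
  have hcoord : ∀ j, |x j| ≤ 1 := by
    intro j
    have h1 : x j ^ 2 ≤ ∑ k, x k ^ 2 :=
      Finset.single_le_sum (fun k _ => sq_nonneg (x k)) (Finset.mem_univ j)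
    rw [hsum] at h1
    exact (sq_le_one_iff_abs_le_one (x j)).1 h1
  have hxi2 : 0 < |x i| := abs_pos.2 hxi
  set c : ℝ := |x i|⁻¹ with hc
  have hc0 : 0 < c := by positivity
  have hc1 : 1 ≤ c := (one_le_inv₀ hxi2).2 (hcoord i)
  have hcn : c ≤ (n:ℝ)+1 := by
    have hpos : (0:ℝ) < (n:ℝ)+1 := by positivity
    have h5 : 1/((n:ℝ)+1) ≤ |x i| := by nlinarith [sq_abs (x i), hcoord i, abs_nonneg (x i), hi]
    rw [hc, inv_le_comm₀ hxi2 hpos, ← one_div]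
    exact h5
  set y : EuclideanSpace ℝ (Fin (n+1)) := c • x with hy
  have hnY : ‖y‖ = c := by rw [hy, norm_smul, hx1, Real.norm_eq_abs, abs_of_pos hc0, mul_one]
  have hyA : ∀ s : ℝ, c * x i = s →
      y ∈ (fun v : Fin n → ℝ => ((WithLp.equiv 2 (Fin (n+1) → ℝ)).symm (i.insertNth s v))) ''
        Metric.closedBall 0 (n+1) := by
    intro s hs
    refine ⟨i.removeNth (fun j => c * x j), ?_, ?_⟩
    · rw [Metric.mem_closedBall]
      rw [dist_pi_le_iff (by positivity)]
      intro k
      have : dist ((i.removeNth (fun j => c * x j)) k) ((0 : Fin n → ℝ) k) = c * |x (i.succAbove k)| := by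
        simp [Fin.removeNth, Real.dist_eq, abs_mul, abs_of_pos hc0]
      rw [this]
      calc c * |x (i.succAbove k)| ≤ c * 1 := by
            exact mul_le_mul_of_nonneg_left (hcoord _) hc0.le
        _ ≤ (n:ℝ)+1 := by rw [mul_one]; exact hcn
    · have h6 : i.insertNth (c * x i) (i.removeNth (fun j => c * x j)) = (fun j => c * x j) :=
        Fin.insertNth_self_removeNth i _
      rw [← hs]
      show (WithLp.equiv 2 (Fin (n+1) → ℝ)).symm
        (i.insertNth (c * x i) (i.removeNth fun j => c * x j)) = y
      rw [h6]
      rfl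
  have hNy : (fun z : EuclideanSpace ℝ (Fin (n+1)) => ‖z‖⁻¹ • z) y = x := by
    show ‖y‖⁻¹ • y = x
    rw [hnY, hy, smul_smul, inv_mul_cancel₀ hc0.ne', one_smul]
  have hsign : c * x i = 1 ∨ c * x i = -1 := by
    rcases hxi.lt_or_gt with h | h
    · right
      rw [hc, abs_of_neg h]
      field_simp
    · left
      rw [hc, abs_of_pos h]
      field_simp
  rw [Set.mem_iUnion]
  refine ⟨i, ?_⟩
  rcases hsign with hs | hs
  · exact Or.inl ⟨y, ⟨hyA 1 hs, by rw [Set.mem_setOf_eq, hnY]; exact hc1⟩, hNy⟩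
  · exact Or.inr ⟨y, ⟨hyA (-1) hs, by rw [Set.mem_setOf_eq, hnY]; exact hc1⟩, hNy⟩

lemma sph_lt_top (n : ℕ) : μH[(n:ℝ)] (Sph n) < ⊤ := by
  calc μH[(n:ℝ)] (Sph n) ≤ μH[(n:ℝ)] (⋃ i : Fin (n+1), (sphPiece n i 1 ∪ sphPiece n i (-1))) :=
        measure_mono (sph_subset_pieces n)
    _ ≤ ∑' i : Fin (n+1), μH[(n:ℝ)] (sphPiece n i 1 ∪ sphPiece n i (-1)) := measure_iUnion_le _
    _ < ⊤ := by
        rw [tsum_fintype]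
        rw [ENNReal.sum_lt_top]
        intro i _
        exact lt_of_le_of_lt (measure_union_le _ _)
          (ENNReal.add_lt_top.2 ⟨sphPiece_lt_top n i 1, sphPiece_lt_top n i (-1)⟩)

lemma measurableSet_Sph (n : ℕ) : MeasurableSet (Sph n) :=
  Metric.isClosed_sphere.measurableSet

lemma continuous_geoDist {n : ℕ} (v : EuclideanSpace ℝ (Fin (n+1))) :
    Continuous (geoDist v) :=
  Real.continuous_arccos.comp (continuous_const.inner continuous_id)

lemma measurableSet_sphCap {n : ℕ} (v : EuclideanSpace ℝ (Fin (n+1))) (r : ℝ) :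
    MeasurableSet (sphCap v r) :=
  (measurableSet_Sph n).inter (measurableSet_lt (continuous_geoDist v).measurable
    measurable_const)

lemma pow_mul_exp_neg_mul_tendsto (n : ℕ) {c : ℝ} (hc : 0 < c) :
    Tendsto (fun t : ℝ => t ^ n * Real.exp (-(c * t))) atTop (𝓝 0) := by
  have h1 := Real.tendsto_pow_mul_exp_neg_atTop_nhds_zero n
  have h2 : Tendsto (fun t : ℝ => c * t) atTop atTop :=
    Tendsto.const_mul_atTop hc tendsto_id
  have h3 := h1.comp h2
  have h4 := h3.const_mul ((c ^ n)⁻¹)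
  rw [mul_zero] at h4
  refine h4.congr fun t => ?_
  show (c ^ n)⁻¹ * ((c * t) ^ n * Real.exp (-(c * t))) = t ^ n * Real.exp (-(c * t))
  rw [mul_pow]
  have : (c:ℝ) ^ n ≠ 0 := by positivity
  field_simp

lemma key_tendsto (n : ℕ) (p : ℝ) (hp : 1 ≤ p)
    (F : EuclideanSpace ℝ (Fin (n+1)) → EuclideanSpace ℝ (Fin (n+1)) → ℝ) (C : ℝ) (hC : 0 ≤ C)
    (hF0 : ∀ x y, 0 ≤ F x y) (hFC : ∀ x ∈ Sph n, ∀ y ∈ Sph n, F x y ≤ C)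
    (δ : ℝ) (hδ : 0 < δ) (hδπ : δ < Real.pi) :
    Tendsto (fun t : ℝ => t ^ n * ∫ x, (∫ y in Sph n \ sphCap (-x) δ,
        F x y / nGeoDist x y ^ ((n:ℝ) - t * p) ∂(sphMeasure n)) ∂(sphMeasure n)) atTop (𝓝 0) := by
  haveI : IsFiniteMeasure (sphMeasure n) :=
    ⟨by rw [sphMeasure, Measure.restrict_apply_univ]; exact sph_lt_top n⟩
  have hπ := Real.pi_pos
  have hp0 : (0:ℝ) < p := lt_of_lt_of_le one_pos hp
  set V : ℝ := (sphMeasure n Set.univ).toReal with hVdef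
  have hV : 0 ≤ V := ENNReal.toReal_nonneg
  set θ : ℝ := 1 - δ / Real.pi with hθdef
  have hθ0 : 0 < θ := by
    have : δ / Real.pi < 1 := (div_lt_one hπ).2 hδπ
    simp only [hθdef]; linarith
  have hθ1 : θ < 1 := by
    have : 0 < δ / Real.pi := div_pos hδ hπ
    simp only [hθdef]; linarith
  -- the eventual bound
  have bound : ∀ t : ℝ, ((n:ℝ)+1)/p ≤ t →
      ‖t ^ n * ∫ x, (∫ y in Sph n \ sphCap (-x) δ,
        F x y / nGeoDist x y ^ ((n:ℝ) - t * p) ∂(sphMeasure n)) ∂(sphMeasure n)‖ ≤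
      (V * V * C) * (t ^ n * θ ^ (t * p - (n:ℝ))) := by
    intro t ht
    have ht0 : 0 ≤ t := le_trans (by positivity) ht
    have htp : (n:ℝ) + 1 ≤ t * p := by rwa [div_le_iff₀ hp0] at ht
    have he0 : (0:ℝ) ≤ t * p - n := by linarith
    have hDθ : 0 ≤ θ ^ (t * p - (n:ℝ)) := Real.rpow_nonneg hθ0.le _
    have hCθ : 0 ≤ C * θ ^ (t * p - (n:ℝ)) := mul_nonneg hC hDθ
    have inner_bound : ∀ x, x ∈ Sph n →
        ‖∫ y in Sph n \ sphCap (-x) δ,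
          F x y / nGeoDist x y ^ ((n:ℝ) - t * p) ∂(sphMeasure n)‖ ≤
        (C * θ ^ (t * p - (n:ℝ))) * V := by
      intro x hx
      have hs : MeasurableSet (Sph n \ sphCap (-x) δ) :=
        (measurableSet_Sph n).diff (measurableSet_sphCap _ _)
      have hae : ∀ᵐ y ∂((sphMeasure n).restrict (Sph n \ sphCap (-x) δ)),
          ‖F x y / nGeoDist x y ^ ((n:ℝ) - t * p)‖ ≤ C * θ ^ (t * p - (n:ℝ)) := by
        filter_upwards [ae_restrict_mem hs] with y hy
        have hyS : y ∈ Sph n := hy.1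
        have hyd : δ ≤ geoDist (-x) y := by
          by_contra hlt
          push_neg at hlt
          exact hy.2 ⟨hyS, hlt⟩
        have hgeo_eq : geoDist x y = Real.pi - geoDist (-x) y := by
          rw [geoDist, geoDist, inner_neg_left, Real.arccos_neg]
          ring
        have ha0 : 0 ≤ nGeoDist x y := div_nonneg (Real.arccos_nonneg _) hπ.le
        have haθ : nGeoDist x y ≤ θ := by
          have h1 : geoDist x y ≤ Real.pi - δ := by rw [hgeo_eq]; linarith
          have h2 : nGeoDist x y ≤ (Real.pi - δ) / Real.pi := by
            rw [nGeoDist]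
            gcongr
          have h3 : (Real.pi - δ) / Real.pi = θ := by
            rw [hθdef]
            field_simp
          exact le_of_le_of_eq h2 h3
        have hrw : F x y / nGeoDist x y ^ ((n:ℝ) - t * p) =
            F x y * nGeoDist x y ^ (t * p - (n:ℝ)) := by
          rw [show (n:ℝ) - t * p = -(t * p - (n:ℝ)) by ring, Real.rpow_neg ha0,
            div_inv_eq_mul]
        rw [hrw, Real.norm_eq_abs,
          abs_of_nonneg (mul_nonneg (hF0 x y) (Real.rpow_nonneg ha0 _))]
        exact mul_le_mul (hFC x hx y hyS) (Real.rpow_le_rpow ha0 haθ he0)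
          (Real.rpow_nonneg ha0 _) hC
      calc ‖∫ y in Sph n \ sphCap (-x) δ,
            F x y / nGeoDist x y ^ ((n:ℝ) - t * p) ∂(sphMeasure n)‖
          ≤ (C * θ ^ (t * p - (n:ℝ))) *
            (((sphMeasure n).restrict (Sph n \ sphCap (-x) δ)) Set.univ).toReal :=
            norm_integral_le_of_norm_le_const hae
        _ ≤ (C * θ ^ (t * p - (n:ℝ))) * V := by
            apply mul_le_mul_of_nonneg_left _ hCθ
            apply ENNReal.toReal_mono (measure_ne_top _ _)
            rw [Measure.restrict_apply_univ]
            exact measure_mono (Set.subset_univ _)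
    have outer : ‖∫ x, (∫ y in Sph n \ sphCap (-x) δ,
        F x y / nGeoDist x y ^ ((n:ℝ) - t * p) ∂(sphMeasure n)) ∂(sphMeasure n)‖ ≤
        ((C * θ ^ (t * p - (n:ℝ))) * V) * V := by
      have hae : ∀ᵐ x ∂(sphMeasure n), ‖∫ y in Sph n \ sphCap (-x) δ,
          F x y / nGeoDist x y ^ ((n:ℝ) - t * p) ∂(sphMeasure n)‖ ≤
          (C * θ ^ (t * p - (n:ℝ))) * V := by
        have hmem : ∀ᵐ x ∂(sphMeasure n), x ∈ Sph n := by
          rw [sphMeasure]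
          exact ae_restrict_mem (measurableSet_Sph n)
        filter_upwards [hmem] with x hx using inner_bound x hx
      exact norm_integral_le_of_norm_le_const hae
    calc ‖t ^ n * ∫ x, (∫ y in Sph n \ sphCap (-x) δ,
          F x y / nGeoDist x y ^ ((n:ℝ) - t * p) ∂(sphMeasure n)) ∂(sphMeasure n)‖
        = t ^ n * ‖∫ x, (∫ y in Sph n \ sphCap (-x) δ,
          F x y / nGeoDist x y ^ ((n:ℝ) - t * p) ∂(sphMeasure n)) ∂(sphMeasure n)‖ := by
          rw [norm_mul, norm_pow, Real.norm_eq_abs, abs_of_nonneg ht0]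
      _ ≤ t ^ n * (((C * θ ^ (t * p - (n:ℝ))) * V) * V) :=
          mul_le_mul_of_nonneg_left outer (by positivity)
      _ = (V * V * C) * (t ^ n * θ ^ (t * p - (n:ℝ))) := by ring
  -- limit of the bound
  have hblim : Tendsto (fun t : ℝ => (V * V * C) * (t ^ n * θ ^ (t * p - (n:ℝ))))
      atTop (𝓝 0) := by
    set L : ℝ := Real.log θ with hLdef
    have hL : L < 0 := Real.log_neg hθ0 hθ1
    have hc : 0 < -(p * L) := by nlinarith
    have h1 := (pow_mul_exp_neg_mul_tendsto n hc).const_mul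
      ((V * V * C) * Real.exp (-(L * (n:ℝ))))
    rw [mul_zero] at h1
    refine h1.congr fun t => ?_
    show ((V * V * C) * Real.exp (-(L * (n:ℝ)))) * (t ^ n * Real.exp (-(-(p * L) * t)))
        = (V * V * C) * (t ^ n * θ ^ (t * p - (n:ℝ)))
    rw [Real.rpow_def_of_pos hθ0, ← hLdef]
    rw [show L * (t * p - (n:ℝ)) = -(-(p*L) * t) + -(L * (n:ℝ)) by ring, Real.exp_add]
    ring
  exact squeeze_zero_norm' (eventually_atTop.2 ⟨((n:ℝ)+1)/p, bound⟩) hblim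

/-- Concentration at the antipode: for continuous `g : S^n → ℝ` and `0 < δ < π`, the
contribution of `S^n \ C(−x,δ)` to the inner integrals vanishes in the limit `t → ∞`:
`lim_{t→∞} tⁿ ∫_{S^n} ∫_{S^n \ C(−x,δ)} |g(x)−g(−x)|^p / d̃(x,y)^{n−tp} dH^n(y) dH^n(x) = 0`
and
`lim_{t→∞} tⁿ ∫_{S^n} ∫_{S^n \ C(−x,δ)} |g(x)−g(y)|^p / d̃(x,y)^{n−tp} dH^n(y) dH^n(x) = 0`. -/
theorem concentration_at_antipode (n : ℕ) (hn : 1 ≤ n) (p : ℝ) (hp : 1 ≤ p)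
    (g : EuclideanSpace ℝ (Fin (n+1)) → ℝ) (hg : Continuous g)
    (δ : ℝ) (hδ : 0 < δ) (hδπ : δ < Real.pi) :
    Tendsto (fun t : ℝ => t ^ n *
        ∫ x, (∫ y in Sph n \ sphCap (-x) δ, |g x - g (-x)| ^ p / nGeoDist x y ^ ((n : ℝ) - t * p)
          ∂(sphMeasure n)) ∂(sphMeasure n))
      atTop (𝓝 0) ∧
    Tendsto (fun t : ℝ => t ^ n *
        ∫ x, (∫ y in Sph n \ sphCap (-x) δ, |g x - g y| ^ p / nGeoDist x y ^ ((n : ℝ) - t * p)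
          ∂(sphMeasure n)) ∂(sphMeasure n))
      atTop (𝓝 0) := by
  obtain ⟨M, hM⟩ := (isCompact_sphere (0 : EuclideanSpace ℝ (Fin (n+1))) 1).exists_bound_of_continuousOn hg.continuousOn
  have hp0 : (0:ℝ) < p := lt_of_lt_of_le one_pos hp
  set C : ℝ := (2 * max M 0) ^ p with hCdef
  have hC : 0 ≤ C := Real.rpow_nonneg (by positivity) _
  have hgb : ∀ x ∈ Sph n, ∀ y ∈ Sph n, |g x - g y| ^ p ≤ C := by
    intro x hx y hy
    refine Real.rpow_le_rpow (abs_nonneg _) ?_ hp0.le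
    have h1 : ‖g x‖ ≤ max M 0 := le_trans (hM x hx) (le_max_left _ _)
    have h2 : ‖g y‖ ≤ max M 0 := le_trans (hM y hy) (le_max_left _ _)
    calc |g x - g y| = ‖g x - g y‖ := (Real.norm_eq_abs _).symm
      _ ≤ ‖g x‖ + ‖g y‖ := norm_sub_le _ _
      _ ≤ 2 * max M 0 := by linarith
  have hneg : ∀ x : EuclideanSpace ℝ (Fin (n+1)), x ∈ Sph n → -x ∈ Sph n := by
    intro x hx
    have : ‖x‖ = 1 := by simpa [Sph] using hx
    show -x ∈ Metric.sphere 0 1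
    rw [mem_sphere_zero_iff_norm, norm_neg]
    exact this
  constructor
  · exact key_tendsto n p hp (fun x _ => |g x - g (-x)| ^ p) C hC
      (fun x y => Real.rpow_nonneg (abs_nonneg _) _)
      (fun x hx y hy => hgb x hx (-x) (hneg x hx)) δ hδ hδπ
  · exact key_tendsto n p hp (fun x y => |g x - g y| ^ p) C hC
      (fun x y => Real.rpow_nonneg (abs_nonneg _) _)
      (fun x hx y hy => hgb x hx y hy) δ hδ hδπ
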